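/- For every natural number n and real x ≥ 0, the spherical Bessel function satisfies |j_n(x)| ≤ (√π / 2) · (1/Γ(n + 3/2)) · (x/2)^n. -/

import Mathlib

open Real MeasureTheory intervalIntegral

lemma gamma_half (k : ℕ) : Real.Gamma ((k:ℝ) + 1/2) =
    (Nat.factorial (2*k)) * Real.sqrt Real.pi / (4^k * Nat.factorial k) := by
  induction k with
  | zero => norm_num [← Real.Gamma_one_half_eq]
  | succ k ih =>
    have h : ((k:ℝ)+1) + 1/2 = ((k:ℝ) + 1/2) + 1 := by ring
    push_cast
    rw [h, Real.Gamma_add_one (by positivity), ih]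
    have h2 : (2*(k+1)) = (2*k+1)+1 := by ring
    rw [h2, Nat.factorial_succ, Nat.factorial_succ, Nat.factorial_succ]
    push_cast
    have h4 : (Nat.factorial k : ℝ) ≠ 0 := by positivity
    field_simp
    ring

lemma integ_val : ∀ n m : ℕ, (∫ t in (-1:ℝ)..1, t^(2*m) * (1-t^2)^n) =
    (4:ℝ)^(n+1) * Nat.factorial (2*m) * Nat.factorial n * Nat.factorial (m+n+1) /
      (Nat.factorial m * Nat.factorial (2*m+2*n+2)) := by
  intro n
  induction n with
  | zero =>
    intro m
    simp_rw [pow_zero, mul_one]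
    rw [integral_pow]
    have h1 : (2*m+2) = (2*m+1)+1 := by ring
    rw [h1, Nat.factorial_succ, Nat.factorial_succ, Nat.factorial_succ]
    have h2 : (-1:ℝ)^(2*m+1) = -1 := by
      rw [pow_succ, pow_mul]; norm_num
    rw [h2]
    push_cast
    have h4 : (Nat.factorial m : ℝ) ≠ 0 := by positivity
    have h5 : (Nat.factorial (2*m) : ℝ) ≠ 0 := by positivity
    field_simp
    ring
  | succ n ih =>
    intro m
    have hg : ∀ t : ℝ, HasDerivAt (fun t : ℝ => t^(2*m+1) * (1-t^2)^(n+1))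
        ((2*m+1 : ℝ) * (t^(2*m) * (1-t^2)^(n+1)) - (2*n+2 : ℝ) * (t^(2*m+2) * (1-t^2)^n)) t := by
      intro t
      have h1 : HasDerivAt (fun t : ℝ => 1 - t^2) (-(2*t^1)) t :=
        (hasDerivAt_pow 2 t).const_sub 1
      have h2 := ((hasDerivAt_pow (2*m+1) t).fun_mul (h1.fun_pow (n+1)))
      refine h2.congr_deriv ?_
      push_cast
      ring
    have hzero : (∫ t in (-1:ℝ)..1,
        ((2*m+1 : ℝ) * (t^(2*m) * (1-t^2)^(n+1)) - (2*n+2 : ℝ) * (t^(2*m+2) * (1-t^2)^n))) = 0 := by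
      rw [integral_eq_sub_of_hasDerivAt (fun t _ => hg t)]
      · norm_num
      · apply Continuous.intervalIntegrable; fun_prop
    rw [_root_.intervalIntegral.integral_sub, _root_.intervalIntegral.integral_const_mul, _root_.intervalIntegral.integral_const_mul] at hzero
    rotate_left
    · apply Continuous.intervalIntegrable; fun_prop
    · apply Continuous.intervalIntegrable; fun_prop
    have hB : (∫ t in (-1:ℝ)..1, t^(2*m+2) * (1-t^2)^n) =
        (4:ℝ)^(n+1) * Nat.factorial (2*m+2) * Nat.factorial n * Nat.factorial (m+n+2) /
          (Nat.factorial (m+1) * Nat.factorial (2*m+2*n+4)) := by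
      have := ih (m+1)
      have e1 : 2*(m+1) = 2*m+2 := by ring
      have e2 : (m+1)+n+1 = m+n+2 := by ring
      have e3 : 2*(m+1)+2*n+2 = 2*m+2*n+4 := by ring
      rw [e3, e1, e2] at this
      exact this
    have hA : (∫ t in (-1:ℝ)..1, t^(2*m) * (1-t^2)^(n+1)) =
        ((2*n+2 : ℝ)/(2*m+1)) * ∫ t in (-1:ℝ)..1, t^(2*m+2) * (1-t^2)^n := by
      have hm : (2*(m:ℝ)+1) ≠ 0 := by positivity
      field_simp
      linarith [hzero]
    rw [hA, hB]
    have e2 : m+(n+1)+1 = m+n+2 := by ring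
    have e3 : 2*m+2*(n+1)+2 = 2*m+2*n+4 := by ring
    rw [e2, e3]
    have f1 : (Nat.factorial (2*m+2) : ℝ) = (2*m+2)*((2*m+1)*Nat.factorial (2*m)) := by
      rw [show 2*m+2 = (2*m+1)+1 from rfl, Nat.factorial_succ, Nat.factorial_succ]; push_cast; ring
    have f2 : (Nat.factorial (n+1) : ℝ) = (n+1)*Nat.factorial n := by
      rw [Nat.factorial_succ]; push_cast; ring
    have f3 : (Nat.factorial (m+1) : ℝ) = (m+1)*Nat.factorial m := by
      rw [Nat.factorial_succ]; push_cast; ring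
    rw [f1, f2, f3]
    push_cast
    have h4 : (Nat.factorial m : ℝ) ≠ 0 := by positivity
    have h5 : (Nat.factorial (2*m) : ℝ) ≠ 0 := by positivity
    have h6 : (Nat.factorial (2*m+2*n+4) : ℝ) ≠ 0 := by positivity
    have hm : (2*(m:ℝ)+1) ≠ 0 := by positivity
    field_simp
    ring

lemma swap_key (n : ℕ) (x : ℝ) :
    (∫ t in (-1:ℝ)..1, (1-t^2)^n * Real.cos (x*t)) =
      ∑' m : ℕ, ((-1:ℝ)^m * x^(2*m) / Nat.factorial (2*m)) *
        ∫ t in (-1:ℝ)..1, t^(2*m) * (1-t^2)^n := by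
  have h1 : (-1:ℝ) ≤ 1 := by norm_num
  set F : ℕ → ℝ → ℝ := fun m t =>
    ((-1:ℝ)^m * x^(2*m) / Nat.factorial (2*m)) * (t^(2*m) * (1-t^2)^n) with hF
  have hcont : ∀ m : ℕ, Continuous (F m) := by intro m; fun_prop
  have hint : ∀ m : ℕ, IntegrableOn (F m) (Set.Ioc (-1:ℝ) 1) :=
    fun m => (hcont m).integrableOn_Ioc
  -- pointwise bound
  have hbd : ∀ m : ℕ, ∀ t ∈ Set.Ioc (-1:ℝ) 1, ‖F m t‖ ≤ |x|^(2*m) / Nat.factorial (2*m) := by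
    intro m t ht
    have ht1 : |t| ≤ 1 := abs_le.2 ⟨le_of_lt ht.1, ht.2⟩
    have h1t : (0:ℝ) ≤ 1 - t^2 := by nlinarith [sq_abs t, abs_nonneg t]
    have h1t' : 1 - t^2 ≤ 1 := by nlinarith [sq_nonneg t]
    have hfac : (0:ℝ) < Nat.factorial (2*m) := by positivity
    rw [hF]
    simp only [norm_mul, norm_div, norm_pow, norm_neg, norm_one, one_pow, one_mul,
      Real.norm_eq_abs]
    rw [abs_of_nonneg h1t, abs_of_nonneg hfac.le]
    have e1 : |t|^(2*m) ≤ 1 := pow_le_one₀ (abs_nonneg t) ht1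
    have e2 : (1-t^2)^n ≤ 1 := pow_le_one₀ h1t h1t'
    have e3 : |t|^(2*m) * (1-t^2)^n ≤ 1 :=
      mul_le_one₀ e1 (pow_nonneg h1t n) e2
    exact mul_le_of_le_one_right (by positivity) e3
  -- summable integrals of norms
  have hsum : Summable fun m : ℕ => ∫ t in Set.Ioc (-1:ℝ) 1, ‖F m t‖ := by
    have hsummaj : Summable (fun m : ℕ => 2 * (|x|^(2*m) / Nat.factorial (2*m))) := by
      apply Summable.mul_left
      have h := Real.summable_pow_div_factorial |x|
      exact h.comp_injective (fun a b hab => by simp only at hab; omega : Function.Injective (fun m : ℕ => 2*m))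
    refine Summable.of_nonneg_of_le
      (fun m => MeasureTheory.integral_nonneg (fun t => norm_nonneg _)) (fun m => ?_) hsummaj
    calc (∫ t in Set.Ioc (-1:ℝ) 1, ‖F m t‖)
        ≤ ∫ _ in Set.Ioc (-1:ℝ) 1, (|x|^(2*m) / Nat.factorial (2*m) : ℝ) := by
          apply setIntegral_mono_on (hint m).norm
            (integrableOn_const measure_Ioc_lt_top.ne) measurableSet_Ioc (hbd m)
      _ = 2 * (|x|^(2*m) / Nat.factorial (2*m)) := by
          rw [setIntegral_const, measureReal_def, Real.volume_Ioc]
          rw [ENNReal.toReal_ofReal (by norm_num)]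
          rw [smul_eq_mul]
          norm_num
  -- swap
  have key := integral_tsum_of_summable_integral_norm hint hsum
  rw [_root_.intervalIntegral.integral_of_le h1]
  have hcos : ∀ t : ℝ, (1-t^2)^n * Real.cos (x*t) = ∑' m : ℕ, F m t := by
    intro t
    have h := (Real.hasSum_cos (x*t)).mul_right ((1-t^2)^n)
    rw [mul_comm, ← h.tsum_eq]
    apply tsum_congr
    intro m
    rw [hF]
    simp only [mul_pow]
    ring
  calc (∫ t in Set.Ioc (-1:ℝ) 1, (1-t^2)^n * Real.cos (x*t))
      = ∫ t in Set.Ioc (-1:ℝ) 1, ∑' m : ℕ, F m t := by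
        simp_rw [hcos]
    _ = ∑' m : ℕ, ∫ t in Set.Ioc (-1:ℝ) 1, F m t := key.symm
    _ = ∑' m : ℕ, ((-1:ℝ)^m * x^(2*m) / Nat.factorial (2*m)) *
          ∫ t in (-1:ℝ)..1, t^(2*m) * (1-t^2)^n := by
        apply tsum_congr
        intro m
        rw [_root_.intervalIntegral.integral_of_le h1, ← MeasureTheory.integral_const_mul]

/-- Bessel function of the first kind `J_ν`, defined by its power series (for `x ≥ 0`,
using real exponentiation). -/
noncomputable def besselJ (ν : ℝ) (x : ℝ) : ℝ :=
  ∑' m : ℕ, (-1 : ℝ) ^ m / ((m.factorial : ℝ) * Real.Gamma ((m : ℝ) + ν + 1))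
      * (x / 2) ^ ((2 * (m : ℝ) + ν))

lemma besselJ_eq (n : ℕ) (x : ℝ) (hx : 0 < x) :
    besselJ ((n:ℝ)+1/2) x = (x/2)^((n:ℝ)+1/2) / (Real.sqrt Real.pi * Nat.factorial n) *
      ∫ t in (-1:ℝ)..1, (1-t^2)^n * Real.cos (x*t) := by
  rw [swap_key, ← tsum_mul_left]
  unfold besselJ
  apply tsum_congr
  intro m
  rw [integ_val n m]
  have hG : Real.Gamma ((m:ℝ) + ((n:ℝ)+1/2) + 1) =
      (Nat.factorial (2*(m+n+1))) * Real.sqrt Real.pi / (4^(m+n+1) * Nat.factorial (m+n+1)) := by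
    rw [← gamma_half (m+n+1)]
    push_cast
    ring_nf
  rw [hG]
  rw [show (2*(m:ℝ) + ((n:ℝ)+1/2)) = ((2*m : ℕ):ℝ) + ((n:ℝ)+1/2) from by push_cast; ring,
    Real.rpow_add (by positivity), Real.rpow_natCast]
  have hsp : Real.sqrt Real.pi ≠ 0 := ne_of_gt (Real.sqrt_pos.2 Real.pi_pos)
  have h2 : ((2:ℝ))^(2*m) = 4^m := by rw [pow_mul]; norm_num
  have hfm : (Nat.factorial m : ℝ) ≠ 0 := by positivity
  have hfn : (Nat.factorial n : ℝ) ≠ 0 := by positivity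
  have hf2m : (Nat.factorial (2*m) : ℝ) ≠ 0 := by positivity
  have hfmn : (Nat.factorial (m+n+1) : ℝ) ≠ 0 := by positivity
  have hfbig : (Nat.factorial (2*m+2*n+2) : ℝ) ≠ 0 := by positivity
  rw [div_pow, h2, show (2*(m+n+1)) = 2*m+2*n+2 from by ring,
    show (4:ℝ)^(m+n+1) = 4^m * 4^n * 4 from by rw [pow_add, pow_add, pow_one]]
  field_simp
  ring

/-- Spherical Bessel function of the first kind `j_n`. -/
noncomputable def sphBessel (n : ℕ) (x : ℝ) : ℝ :=
  if x = 0 then (if n = 0 then 1 else 0)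
  else Real.sqrt (Real.pi / (2 * x)) * besselJ ((n : ℝ) + 1/2) x

theorem stmt_2 (n : ℕ) (x : ℝ) (hx : 0 ≤ x) :
    |sphBessel n x| ≤
      Real.sqrt Real.pi / 2 * (1 / Real.Gamma ((n : ℝ) + 3/2)) * (x / 2) ^ n := by
  have hsp : (0:ℝ) < Real.sqrt Real.pi := Real.sqrt_pos.2 Real.pi_pos
  have hGam : Real.Gamma ((n:ℝ) + 3/2) =
      (Nat.factorial (2*n+2)) * Real.sqrt Real.pi / (4^(n+1) * Nat.factorial (n+1)) := by
    have h := gamma_half (n+1)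
    rw [show 2*(n+1) = 2*n+2 from by ring] at h
    rw [show (n:ℝ)+3/2 = ((n+1:ℕ):ℝ)+1/2 from by push_cast; ring, h]
  rcases eq_or_lt_of_le hx with h0 | hxpos
  · subst h0
    cases n with
    | zero =>
      simp only [sphBessel, if_pos rfl]
      rw [hGam]
      have hne : Real.sqrt Real.pi ≠ 0 := ne_of_gt hsp
      norm_num [Nat.factorial]
      rw [show Real.sqrt Real.pi / 2 * (4 / (2 * Real.sqrt Real.pi)) =
        Real.sqrt Real.pi / Real.sqrt Real.pi from by ring, div_self hne]
    | succ k =>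
      simp only [sphBessel, if_pos rfl]
      norm_num [zero_pow]
  · have hx2 : (0:ℝ) < x/2 := by linarith
    have hfn : (0:ℝ) < Nat.factorial n := by positivity
    -- bound on integral
    have hintbd : |∫ t in (-1:ℝ)..1, (1-t^2)^n * Real.cos (x*t)| ≤
        ∫ t in (-1:ℝ)..1, (1-t^2)^n := by
      refine (_root_.intervalIntegral.abs_integral_le_integral_abs (by norm_num)).trans ?_
      apply _root_.intervalIntegral.integral_mono_on (by norm_num)
        (by apply Continuous.intervalIntegrable; fun_prop)
        (by apply Continuous.intervalIntegrable; fun_prop)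
      intro t ht
      have h1t : (0:ℝ) ≤ 1 - t^2 := by
        rcases ht with ⟨ht1, ht2⟩; nlinarith
      rw [abs_mul, abs_of_nonneg (pow_nonneg h1t n)]
      calc (1-t^2)^n * |Real.cos (x*t)| ≤ (1-t^2)^n * 1 :=
            mul_le_mul_of_nonneg_left (Real.abs_cos_le_one _) (pow_nonneg h1t n)
        _ = (1-t^2)^n := mul_one _
    have hI0 : (∫ t in (-1:ℝ)..1, (1-t^2)^n) =
        (4:ℝ)^(n+1) * Nat.factorial n * Nat.factorial (n+1) / Nat.factorial (2*n+2) := by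
      have h := integ_val n 0
      norm_num at h
      convert h using 2 <;> ring
    have hrpow : (x/2)^((n:ℝ)+1/2) = (x/2)^n * Real.sqrt (x/2) := by
      rw [Real.rpow_add hx2, Real.rpow_natCast, ← Real.sqrt_eq_rpow]
    have hsq : Real.sqrt (Real.pi/(2*x)) * Real.sqrt (x/2) = Real.sqrt Real.pi / 2 := by
      rw [← Real.sqrt_mul (by positivity)]
      rw [show Real.pi/(2*x) * (x/2) = Real.pi/4 from by field_simp; ring]
      rw [Real.sqrt_div Real.pi_pos.le, show (4:ℝ) = 2^2 from by norm_num,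
        Real.sqrt_sq (by norm_num)]
    have habs : |sphBessel n x| = Real.sqrt (Real.pi/(2*x)) *
        ((x/2)^((n:ℝ)+1/2) / (Real.sqrt Real.pi * Nat.factorial n)) *
        |∫ t in (-1:ℝ)..1, (1-t^2)^n * Real.cos (x*t)| := by
      rw [sphBessel, if_neg (ne_of_gt hxpos), besselJ_eq n x hxpos, abs_mul, abs_mul,
        abs_of_nonneg (Real.sqrt_nonneg _),
        abs_of_nonneg (div_nonneg (Real.rpow_nonneg hx2.le _) (by positivity)), mul_assoc]
    rw [habs]
    calc Real.sqrt (Real.pi/(2*x)) *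
        ((x/2)^((n:ℝ)+1/2) / (Real.sqrt Real.pi * Nat.factorial n)) * |_| ≤
        Real.sqrt (Real.pi/(2*x)) *
        ((x/2)^((n:ℝ)+1/2) / (Real.sqrt Real.pi * Nat.factorial n)) *
        ∫ t in (-1:ℝ)..1, (1-t^2)^n := by
          apply mul_le_mul_of_nonneg_left hintbd (by positivity)
      _ = Real.sqrt Real.pi / 2 * (1 / Real.Gamma ((n : ℝ) + 3/2)) * (x / 2) ^ n := by
          rw [hI0, hrpow, hGam]
          rw [show Real.sqrt (Real.pi/(2*x)) * ((x/2)^n * Real.sqrt (x/2) /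
              (Real.sqrt Real.pi * Nat.factorial n)) *
              ((4:ℝ)^(n+1) * Nat.factorial n * Nat.factorial (n+1) / Nat.factorial (2*n+2)) =
            (Real.sqrt (Real.pi/(2*x)) * Real.sqrt (x/2)) * ((x/2)^n /
              (Real.sqrt Real.pi * Nat.factorial n)) *
              ((4:ℝ)^(n+1) * Nat.factorial n * Nat.factorial (n+1) / Nat.factorial (2*n+2))
            from by ring, hsq]
          have h1 : (0:ℝ) < Nat.factorial (n+1) := by positivity
          have h2 : (0:ℝ) < Nat.factorial (2*n+2) := by positivity
          field_simp
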